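/- For α ∈ (0, 1/2) and real numbers 0 ≤ s < t, one has ∫₀^s ((s-τ)^(-α) - (t-τ)^(-α)) (t-τ)^(-α) dτ ≤ (t-s)^(1-2α) · ∫₀^∞ (v^(-α) - (v+1)^(-α)) (v+1)^(-α) dv, and the latter integral is finite and at most 1/(1-2α). -/

import Mathlib

open MeasureTheory Real Set Filter Topology

lemma aux_rpow_sq (α x : ℝ) (hx : 0 < x) : x ^ (-α) * x ^ (-α) = x ^ (-(2*α)) := by
  rw [← Real.rpow_add hx, show -α + -α = -(2*α) by ring]

lemma aux_h (α : ℝ) (h0 : 0 < α) (h2 : α < 1/2) :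
    IntegrableOn (fun v : ℝ => v ^ (-(2*α)) - (v+1) ^ (-(2*α))) (Set.Ioi (0:ℝ)) ∧
    (∫ v in Set.Ioi (0:ℝ), (v ^ (-(2*α)) - (v+1) ^ (-(2*α)))) = 1/(1-2*α) := by
  have hβ : (0:ℝ) < 1 - 2*α := by linarith
  set β := 1 - 2*α with hβdef
  have hβ1 : β ≤ 1 := by rw [hβdef]; linarith
  have hexp : β - 1 = -(2*α) := by rw [hβdef]; ring
  set G : ℝ → ℝ := fun v => (v ^ β - (v+1) ^ β) / β with hG
  have hderiv : ∀ x ∈ Ioi (0:ℝ), HasDerivAt G (x ^ (-(2*α)) - (x+1) ^ (-(2*α))) x := by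
    intro x hx
    have hx0 : (0:ℝ) < x := hx
    have h1 : HasDerivAt (fun v : ℝ => v ^ β) (β * x ^ (β-1)) x :=
      Real.hasDerivAt_rpow_const (Or.inl hx0.ne')
    have h2' : HasDerivAt (fun v : ℝ => (v+1) ^ β) (1 * β * (x+1) ^ (β-1)) x :=
      ((hasDerivAt_id x).add_const 1).rpow_const (Or.inl (by positivity))
    have hd := (h1.sub h2').div_const β
    refine hd.congr_deriv ?_
    rw [hexp]
    field_simp
  have hpos : ∀ x ∈ Ioi (0:ℝ), 0 ≤ x ^ (-(2*α)) - (x+1) ^ (-(2*α)) := by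
    intro x hx
    have hx0 : (0:ℝ) < x := hx
    exact sub_nonneg.2 (Real.rpow_le_rpow_of_nonpos hx0 (by linarith) (by linarith))
  have hcont : ContinuousWithinAt G (Ici (0:ℝ)) 0 := by
    apply ContinuousAt.continuousWithinAt
    exact (((continuousAt_id.rpow_const (Or.inr hβ.le)).sub
      ((continuousAt_id.add continuousAt_const).rpow_const (Or.inl (by norm_num)))).div_const β)
  have htend : Tendsto G atTop (𝓝 0) := by
    have hup : ∀ᶠ v : ℝ in atTop, v ^ β - (v+1) ^ β ≤ 0 := by
      filter_upwards [eventually_ge_atTop (1:ℝ)] with v hv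
      exact sub_nonpos.2 (Real.rpow_le_rpow (by linarith) (by linarith) hβ.le)
    have hlo : ∀ᶠ v : ℝ in atTop, -(v ^ (β-1)) ≤ v ^ β - (v+1) ^ β := by
      filter_upwards [eventually_ge_atTop (1:ℝ)] with v hv
      have hv0 : (0:ℝ) < v := by linarith
      have key : (v+1) ^ β ≤ v ^ β + v ^ (β-1) := by
        have e1 : (v+1 : ℝ) = v * (1 + 1/v) := by field_simp
        have e2 : (v+1 : ℝ) ^ β = v ^ β * (1 + 1/v) ^ β := by
          rw [e1, Real.mul_rpow hv0.le (by positivity)]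
        have e3 : (1 + 1/v : ℝ) ^ β ≤ 1 + 1/v := by
          calc (1 + 1/v : ℝ) ^ β ≤ (1 + 1/v) ^ (1:ℝ) :=
                Real.rpow_le_rpow_of_exponent_le (le_add_of_nonneg_right (by positivity)) hβ1
            _ = 1 + 1/v := Real.rpow_one _
        calc (v+1 : ℝ) ^ β = v ^ β * (1 + 1/v) ^ β := e2
          _ ≤ v ^ β * (1 + 1/v) :=
              mul_le_mul_of_nonneg_left e3 (Real.rpow_nonneg hv0.le _)
          _ = v ^ β + v ^ β / v := by ring
          _ = v ^ β + v ^ (β-1) := by rw [Real.rpow_sub hv0 β 1, Real.rpow_one]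
      linarith
    have t1 : Tendsto (fun v : ℝ => -(v ^ (β-1))) atTop (𝓝 0) := by
      rw [hexp]
      simpa using (tendsto_rpow_neg_atTop (show (0:ℝ) < 2*α by linarith)).neg
    have tdiff : Tendsto (fun v : ℝ => v ^ β - (v+1) ^ β) atTop (𝓝 0) :=
      tendsto_of_tendsto_of_tendsto_of_le_of_le' t1 tendsto_const_nhds hlo hup
    have := tdiff.div_const β
    simpa using this
  refine ⟨integrableOn_Ioi_deriv_of_nonneg hcont hderiv hpos htend, ?_⟩
  rw [integral_Ioi_of_hasDerivAt_of_nonneg hcont hderiv hpos htend]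
  simp only [hG]
  rw [Real.zero_rpow hβ.ne', zero_add, Real.one_rpow]
  field_simp
  ring

theorem stmt_5 (α s t : ℝ) (hα : α ∈ Set.Ioo (0:ℝ) (1/2))
    (hs : 0 ≤ s) (hst : s < t) :
    (∫ τ in (0:ℝ)..s, ((s - τ) ^ (-α) - (t - τ) ^ (-α)) * (t - τ) ^ (-α)) ≤
      (t - s) ^ (1 - 2*α) *
        (∫ v in Set.Ioi (0:ℝ), (v ^ (-α) - (v + 1) ^ (-α)) * (v + 1) ^ (-α)) ∧
    IntegrableOn (fun v : ℝ => (v ^ (-α) - (v + 1) ^ (-α)) * (v + 1) ^ (-α))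
      (Set.Ioi (0:ℝ)) ∧
    (∫ v in Set.Ioi (0:ℝ), (v ^ (-α) - (v + 1) ^ (-α)) * (v + 1) ^ (-α)) ≤
      1 / (1 - 2*α) := by
  obtain ⟨h0, h2⟩ := hα
  obtain ⟨hh_int, hh_val⟩ := aux_h α h0 h2
  set g : ℝ → ℝ := fun v => (v ^ (-α) - (v + 1) ^ (-α)) * (v + 1) ^ (-α) with hgdef
  have hgnn : ∀ v : ℝ, 0 < v → 0 ≤ g v := by
    intro v hv
    apply mul_nonneg _ (Real.rpow_nonneg (by linarith) _)
    exact sub_nonneg.2 (Real.rpow_le_rpow_of_nonpos hv (by linarith) (by linarith))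
  have hgh : ∀ v : ℝ, 0 < v → g v ≤ v ^ (-(2*α)) - (v+1) ^ (-(2*α)) := by
    intro v hv
    have hv1 : (0:ℝ) < v + 1 := by linarith
    calc g v = v ^ (-α) * (v+1) ^ (-α) - (v+1) ^ (-α) * (v+1) ^ (-α) := by
          simp only [hgdef]; ring
      _ ≤ v ^ (-α) * v ^ (-α) - (v+1) ^ (-α) * (v+1) ^ (-α) := by
          have h' := mul_le_mul_of_nonneg_left
            (Real.rpow_le_rpow_of_nonpos hv (by linarith : v ≤ v + 1) (by linarith : -α ≤ 0))
            (Real.rpow_nonneg hv.le (-α))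
          linarith
      _ = v ^ (-(2*α)) - (v+1) ^ (-(2*α)) := by
          rw [aux_rpow_sq α v hv, aux_rpow_sq α (v+1) hv1]
  have hgmeas : AEStronglyMeasurable g (volume.restrict (Set.Ioi (0:ℝ))) := by
    apply ContinuousOn.aestronglyMeasurable _ measurableSet_Ioi
    apply ContinuousOn.mul
    · apply ContinuousOn.sub
      · exact fun x hx => ((continuousAt_id.rpow_const
          (Or.inl (ne_of_gt hx))).continuousWithinAt)
      · intro x hx
        have hx0 : (0:ℝ) < x := hx
        exact (((continuousAt_id.add continuousAt_const).rpow_const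
          (Or.inl (ne_of_gt (show (0:ℝ) < x + 1 by linarith)))).continuousWithinAt)
    · intro x hx
      have hx0 : (0:ℝ) < x := hx
      exact (((continuousAt_id.add continuousAt_const).rpow_const
        (Or.inl (ne_of_gt (show (0:ℝ) < x + 1 by linarith)))).continuousWithinAt)
  have hg_int : IntegrableOn g (Set.Ioi (0:ℝ)) := by
    apply MeasureTheory.Integrable.mono hh_int hgmeas
    rw [ae_restrict_iff' measurableSet_Ioi]
    filter_upwards with v hv
    have hv0 : (0:ℝ) < v := hv
    have hnnh : (0:ℝ) ≤ v ^ (-(2*α)) - (v+1) ^ (-(2*α)) :=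
      sub_nonneg.2 (Real.rpow_le_rpow_of_nonpos hv0 (by linarith) (by linarith))
    rw [Real.norm_eq_abs, Real.norm_eq_abs, abs_of_nonneg (hgnn v hv0), abs_of_nonneg hnnh]
    exact hgh v hv0
  have hint_le : (∫ v in Set.Ioi (0:ℝ), g v) ≤ 1/(1-2*α) := by
    rw [← hh_val]
    exact setIntegral_mono_on hg_int hh_int measurableSet_Ioi fun v hv => hgh v hv
  refine ⟨?_, hg_int, hint_le⟩
  set c := t - s with hcdef
  have hc : 0 < c := by rw [hcdef]; linarith
  have hsc : (0:ℝ) ≤ s / c := div_nonneg hs hc.le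
  have hle : (∫ v in (0:ℝ)..(s/c), g v) ≤ ∫ v in Set.Ioi (0:ℝ), g v := by
    rw [intervalIntegral.integral_of_le hsc]
    apply setIntegral_mono_set hg_int
    · exact (ae_restrict_iff' measurableSet_Ioi).2 (ae_of_all _ fun v hv => hgnn v hv)
    · exact HasSubset.Subset.eventuallyLE Ioc_subset_Ioi_self
  have step1 : (∫ τ in (0:ℝ)..s, ((s - τ) ^ (-α) - (t - τ) ^ (-α)) * (t - τ) ^ (-α))
      = ∫ τ in (0:ℝ)..s, ((s - τ) ^ (-α) - ((s - τ) + c) ^ (-α)) * ((s - τ) + c) ^ (-α) := by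
    apply intervalIntegral.integral_congr
    intro τ _
    dsimp only
    rw [show s - τ + c = t - τ by rw [hcdef]; ring]
  have step2 : (∫ τ in (0:ℝ)..s, ((s - τ) ^ (-α) - ((s - τ) + c) ^ (-α)) * ((s - τ) + c) ^ (-α))
      = ∫ u in (0:ℝ)..s, (u ^ (-α) - (u + c) ^ (-α)) * (u + c) ^ (-α) := by
    have := intervalIntegral.integral_comp_sub_left (a := (0:ℝ)) (b := s)
      (fun u => (u ^ (-α) - (u + c) ^ (-α)) * (u + c) ^ (-α)) s
    simpa using this
  have step3 : (∫ u in (0:ℝ)..s, (u ^ (-α) - (u + c) ^ (-α)) * (u + c) ^ (-α))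
      = c * ∫ v in (0:ℝ)..(s/c), ((c*v) ^ (-α) - (c*v + c) ^ (-α)) * (c*v + c) ^ (-α) := by
    rw [intervalIntegral.integral_comp_mul_left
      (fun u => (u ^ (-α) - (u + c) ^ (-α)) * (u + c) ^ (-α)) hc.ne']
    rw [mul_zero, mul_div_cancel₀ _ hc.ne', smul_eq_mul, ← mul_assoc,
      mul_inv_cancel₀ hc.ne', one_mul]
  have step4 : (∫ v in (0:ℝ)..(s/c), ((c*v) ^ (-α) - (c*v + c) ^ (-α)) * (c*v + c) ^ (-α))
      = c ^ (-(2*α)) * ∫ v in (0:ℝ)..(s/c), g v := by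
    rw [← intervalIntegral.integral_const_mul]
    apply intervalIntegral.integral_congr
    intro v hv
    have hv0 : (0:ℝ) ≤ v := by
      rw [Set.uIcc_of_le hsc] at hv
      exact hv.1
    have e1 : (c*v) ^ (-α) = c ^ (-α) * v ^ (-α) := Real.mul_rpow hc.le hv0
    have e2 : (c*v + c) ^ (-α) = c ^ (-α) * (v+1) ^ (-α) := by
      rw [show c*v + c = c * (v+1) by ring, Real.mul_rpow hc.le (by linarith)]
    dsimp only
    rw [e1, e2]
    simp only [hgdef]
    rw [← aux_rpow_sq α c hc]
    ring
  have hcc : c * c ^ (-(2*α)) = c ^ (1-2*α) := by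
    rw [show (1-2*α : ℝ) = 1 + -(2*α) by ring, Real.rpow_add hc, Real.rpow_one]
  calc (∫ τ in (0:ℝ)..s, ((s - τ) ^ (-α) - (t - τ) ^ (-α)) * (t - τ) ^ (-α))
      = c * (c ^ (-(2*α)) * ∫ v in (0:ℝ)..(s/c), g v) := by
        rw [step1, step2, step3, step4]
    _ = c ^ (1-2*α) * ∫ v in (0:ℝ)..(s/c), g v := by rw [← mul_assoc, hcc]
    _ ≤ c ^ (1-2*α) * ∫ v in Set.Ioi (0:ℝ), g v :=
        mul_le_mul_of_nonneg_left hle (Real.rpow_nonneg hc.le _)
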